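/- For all n ≥ 1, the number of non-crossing permutations of {1,1,...,n,n} that avoid the pattern 122 (no indices i<j<k with π_i < π_j = π_k) equals the n-th Catalan number C_n = binom(2n,n)/(n+1). -/

import Mathlib

/-- A permutation of the multiset {1,1,2,2,...,n,n}, encoded as a function
`Fin (2*n) → Fin n` where the value `v : Fin n` represents `v+1`:
every value appears exactly twice. -/
def IsMultisetPerm {n : ℕ} (π : Fin (2*n) → Fin n) : Prop :=
  ∀ v : Fin n, (Finset.univ.filter fun i => π i = v).card = 2

/-- Non-nesting: no indices i<j<k<l with π_i=π_l, π_j=π_k, π_i≠π_j. -/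
def NonNesting {n : ℕ} (π : Fin (2*n) → Fin n) : Prop :=
  ¬ ∃ i j k l : Fin (2*n), i < j ∧ j < k ∧ k < l ∧
      π i = π l ∧ π j = π k ∧ π i ≠ π j

/-- Non-crossing: no indices i<j<k<l with π_i=π_k, π_j=π_l, π_i≠π_j. -/
def NonCrossing {n : ℕ} (π : Fin (2*n) → Fin n) : Prop :=
  ¬ ∃ i j k l : Fin (2*n), i < j ∧ j < k ∧ k < l ∧
      π i = π k ∧ π j = π l ∧ π i ≠ π j

/-- Avoiding the pattern 231: no i<j<k with π_k < π_i < π_j. -/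
def Avoids231 {n : ℕ} (π : Fin (2*n) → Fin n) : Prop :=
  ¬ ∃ i j k : Fin (2*n), i < j ∧ j < k ∧ π k < π i ∧ π i < π j

/-- Avoiding 122: no i<j<k with π_i < π_j = π_k. -/
def Avoids122 {n : ℕ} (π : Fin (2*n) → Fin n) : Prop :=
  ¬ ∃ i j k : Fin (2*n), i < j ∧ j < k ∧ π i < π j ∧ π j = π k

/-- The first entry is the value 1 (encoded as `0 : Fin n`). -/
def FirstIsOne {n : ℕ} (π : Fin (2*n) → Fin n) : Prop :=
  ∃ h : 0 < n, π ⟨0, by omega⟩ = ⟨0, h⟩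

/-- The last entry is the value n (encoded as `n-1 : Fin n`). -/
def LastIsMax {n : ℕ} (π : Fin (2*n) → Fin n) : Prop :=
  ∃ h : 0 < n, π ⟨2*n - 1, by omega⟩ = ⟨n - 1, by omega⟩


namespace NCP
open List DyckStep

def NCl (l : List ℕ) : Prop := ∀ i j k m : ℕ, i < j → j < k → k < m → m < l.length →
  l.getD i 0 = l.getD k 0 → l.getD j 0 = l.getD m 0 → l.getD i 0 = l.getD j 0

def A122l (l : List ℕ) : Prop := ∀ i j k : ℕ, i < j → j < k → k < l.length →
  l.getD j 0 = l.getD k 0 → l.getD j 0 ≤ l.getD i 0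

def FO (l : List ℕ) (i : ℕ) : Prop := ∃ j, i < j ∧ j < l.length ∧ l.getD j 0 = l.getD i 0

def Pl (w : List DyckStep) (n c : ℕ) (l : List ℕ) : Prop :=
  l.length = w.length ∧ l.length = 2*n ∧
  (∀ k, l.count k = if c ≤ k ∧ k < c + n then 2 else 0) ∧
  NCl l ∧ A122l l ∧ ∀ i, w.getD i D = U ↔ FO l i

lemma count_eq_card_filter {α : Type*} [DecidableEq α] (l : List α) (d a : α) :
    l.count a = ((Finset.range l.length).filter (fun i => l.getD i d = a)).card := by
  induction l with
  | nil => simp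
  | cons x t ih =>
    rw [List.count_cons, List.length_cons, Finset.card_filter, Finset.sum_range_succ',
      ih, Finset.card_filter]
    simp only [List.getD_cons_succ, List.getD_cons_zero]
    by_cases h : x = a <;> simp [h]

lemma two_positions {l : List ℕ} {k : ℕ} (h : l.count k = 2) :
    ∃ a b, a < b ∧ b < l.length ∧ l.getD a 0 = k ∧ l.getD b 0 = k ∧
      ∀ t, t < l.length → l.getD t 0 = k → t = a ∨ t = b := by
  rw [count_eq_card_filter l 0 k] at h
  obtain ⟨a, b, hab, hs⟩ := Finset.card_eq_two.mp h
  have ha : a ∈ ({a, b} : Finset ℕ) := by simp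
  have hb : b ∈ ({a, b} : Finset ℕ) := by simp
  rw [← hs, Finset.mem_filter, Finset.mem_range] at ha hb
  have key : ∀ t, t < l.length → l.getD t 0 = k → t = a ∨ t = b := by
    intro t ht hv
    have : t ∈ ({a, b} : Finset ℕ) := by
      rw [← hs, Finset.mem_filter, Finset.mem_range]; exact ⟨ht, hv⟩
    simpa using this
  rcases lt_or_gt_of_ne hab with h' | h'
  · exact ⟨a, b, h', hb.1, ha.2, hb.2, key⟩
  · exact ⟨b, a, h', ha.1, hb.2, ha.2, fun t ht hv => (key t ht hv).symm⟩

lemma countU_add_countD (v : List DyckStep) : v.count U + v.count D = v.length := by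
  induction v with
  | nil => simp
  | cons s tl ih => cases s <;> simp [List.count_cons] <;> omega

section PlFacts
variable {w : List DyckStep} {n c : ℕ} {l : List ℕ} (hl : Pl w n c l)

include hl

lemma Pl.len : l.length = 2*n := hl.2.1
lemma Pl.wlen : w.length = 2*n := hl.1 ▸ hl.2.1

/-- every in-range entry is in [c, c+n) -/
lemma Pl.bound {i : ℕ} (hi : i < l.length) : c ≤ l.getD i 0 ∧ l.getD i 0 < c + n := by
  have hm : l.getD i 0 ∈ l := by
    rw [List.getD_eq_getElem _ _ hi]; exact List.getElem_mem _
  have := hl.2.2.1 (l.getD i 0)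
  rw [← List.count_pos_iff] at hm
  by_contra hc
  rw [if_neg (by tauto)] at this
  omega

lemma Pl.pair {k : ℕ} (h1 : c ≤ k) (h2 : k < c + n) :
    ∃ a b, a < b ∧ b < l.length ∧ l.getD a 0 = k ∧ l.getD b 0 = k ∧
      ∀ t, t < l.length → l.getD t 0 = k → t = a ∨ t = b :=
  two_positions (by rw [hl.2.2.1 k, if_pos ⟨h1, h2⟩])

lemma Pl.partner {i : ℕ} (hi : i < l.length) :
    ∃ j, j < l.length ∧ j ≠ i ∧ l.getD j 0 = l.getD i 0 ∧
      ∀ t, t < l.length → l.getD t 0 = l.getD i 0 → t = i ∨ t = j := by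
  obtain ⟨a, b, hab, hblen, ha', hb', huni⟩ := hl.pair (hl.bound hi).1 (hl.bound hi).2
  rcases huni i hi rfl with rfl | rfl
  · exact ⟨b, hblen, by omega, hb', fun t ht hv => huni t ht hv⟩
  · exact ⟨a, by omega, by omega, ha', fun t ht hv => (huni t ht hv).symm⟩

omit hl in
lemma Pl.fo_iff_lt {i j : ℕ} (hi : i < l.length) (hj : j < l.length) (hne : j ≠ i)
    (hv : l.getD j 0 = l.getD i 0)
    (huni : ∀ t, t < l.length → l.getD t 0 = l.getD i 0 → t = i ∨ t = j) :
    FO l i ↔ i < j := by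
  constructor
  · rintro ⟨k, hk1, hk2, hk3⟩
    rcases huni k hk2 hk3 with rfl | rfl
    · omega
    · exact hk1
  · intro h; exact ⟨j, h, hj, hv⟩

/-- strictly decreasing values at first occurrences -/
lemma Pl.strictAnti {q q' : ℕ} (hqq : q < q') (h1 : FO l q) (h2 : FO l q') :
    l.getD q' 0 < l.getD q 0 := by
  obtain ⟨j, hj1, hj2, hj3⟩ := h2
  have hle : l.getD q' 0 ≤ l.getD q 0 := hl.2.2.2.2.1 q q' j hqq hj1 hj2 hj3.symm
  rcases lt_or_eq_of_le hle with h | h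
  · exact h
  · exfalso
    have hq'len : q' < l.length := lt_trans hj1 hj2
    have hb := hl.bound hq'len
    obtain ⟨a, b, hab, hblen, ha', hb', huni⟩ := hl.pair hb.1 hb.2
    have e1 := huni q (by omega) h.symm
    have e2 := huni q' hq'len rfl
    have e3 := huni j hj2 hj3
    rcases e1 with rfl | rfl <;> rcases e2 with rfl | rfl <;> omega

/-- KEY: the value at a first occurrence position `p` satisfies
`l[p] + 1 + #U(w.take p) = c + n`. -/
lemma Pl.key {p : ℕ} (hp : FO l p) :
    l.getD p 0 + 1 + (w.take p).count U = c + n := by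
  classical
  have hplen : p < l.length := by obtain ⟨j, h1, h2, _⟩ := hp; omega
  have hwl := hl.wlen; have hll := hl.len
  have hcount : (w.take p).count U =
      ((Finset.range p).filter (fun i => FO l i)).card := by
    rw [count_eq_card_filter (w.take p) D U]
    have hlen : (w.take p).length = p := by rw [List.length_take]; omega
    rw [hlen]
    congr 1
    apply Finset.filter_congr
    intro i hi
    rw [Finset.mem_range] at hi
    rw [List.getD_eq_getElem _ _ (by rw [List.length_take]; omega), List.getElem_take,
      ← List.getD_eq_getElem w D (by omega)]
    exact hl.2.2.2.2.2 i
  rw [hcount]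
  have hbij : ((Finset.range p).filter (fun i => FO l i)).card =
      (Finset.Ioo (l.getD p 0) (c + n)).card := by
    apply Finset.card_bij (fun q _ => l.getD q 0)
    · intro q hq
      rw [Finset.mem_filter, Finset.mem_range] at hq
      rw [Finset.mem_Ioo]
      exact ⟨hl.strictAnti hq.1 hq.2 hp, (hl.bound (lt_trans hq.1 hplen)).2⟩
    · intro q hq q' hq' he
      rw [Finset.mem_filter, Finset.mem_range] at hq hq'
      by_contra hne
      rcases lt_or_gt_of_ne hne with h | h
      · exact absurd he (ne_of_gt (hl.strictAnti h hq.2 hq'.2))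
      · exact absurd he.symm (ne_of_gt (hl.strictAnti h hq'.2 hq.2))
    · intro v hv
      rw [Finset.mem_Ioo] at hv
      have hvc : c ≤ v := le_trans (hl.bound hplen).1 (le_of_lt hv.1)
      obtain ⟨a, b, hab, hblen, ha', hb', huni⟩ := hl.pair hvc hv.2
      have hfoa : FO l a := ⟨b, hab, hblen, by rw [hb', ha']⟩
      refine ⟨a, ?_, ha'⟩
      rw [Finset.mem_filter, Finset.mem_range]
      refine ⟨?_, hfoa⟩
      by_contra hap
      push_neg at hap
      rcases lt_or_eq_of_le hap with h | h
      · have := hl.strictAnti h hp hfoa; rw [ha'] at this; omega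
      · subst h; rw [ha'] at hv; omega
  rw [hbij, Nat.card_Ioo]
  have := (hl.bound hplen).2
  omega

/-- the number of first-occurrence positions (=U's in w) is n -/
lemma Pl.countU : w.count U = n := by
  classical
  have hwl := hl.wlen; have hll := hl.len
  have hcount : w.count U = ((Finset.range (2*n)).filter (fun i => FO l i)).card := by
    rw [count_eq_card_filter w D U, hwl]
    congr 1
    apply Finset.filter_congr
    intro i hi
    exact hl.2.2.2.2.2 i
  rw [hcount]
  rw [show ((Finset.range (2*n)).filter (fun i => FO l i)).card = (Finset.Ico c (c+n)).card
    from ?_, Nat.card_Ico]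
  · omega
  apply Finset.card_bij (fun q _ => l.getD q 0)
  · intro q hq
    rw [Finset.mem_filter, Finset.mem_range] at hq
    rw [Finset.mem_Ico]
    exact hl.bound (hll ▸ hq.1)
  · intro q hq q' hq' he
    rw [Finset.mem_filter, Finset.mem_range] at hq hq'
    by_contra hne
    rcases lt_or_gt_of_ne hne with h | h
    · exact absurd he (ne_of_gt (hl.strictAnti h hq.2 hq'.2))
    · exact absurd he.symm (ne_of_gt (hl.strictAnti h hq'.2 hq.2))
  · intro v hv
    rw [Finset.mem_Ico] at hv
    obtain ⟨a, b, hab, hblen, ha', hb', huni⟩ := hl.pair hv.1 hv.2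
    exact ⟨a, by
      rw [Finset.mem_filter, Finset.mem_range]
      exact ⟨by omega, ⟨b, hab, hblen, by rw [hb', ha']⟩⟩, ha'⟩

/-- prefix condition: D count ≤ U count in every prefix of w -/
lemma Pl.prefixLe (t : ℕ) : (w.take t).count D ≤ (w.take t).count U := by
  classical
  have hwl := hl.wlen; have hll := hl.len
  suffices main : ∀ t, t ≤ w.length → (w.take t).count D ≤ (w.take t).count U by
    rcases le_or_gt t w.length with ht | ht
    · exact main t ht
    · rw [List.take_of_length_le (le_of_lt ht)]
      have := main w.length le_rfl
      rwa [List.take_length] at this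
  clear t
  intro t ht
  have hget : ∀ i, i < t → (w.take t).getD i D = w.getD i D := by
    intro i hi
    rw [List.getD_eq_getElem _ _ (by rw [List.length_take]; omega), List.getElem_take,
      List.getD_eq_getElem w D (by omega)]
  rw [count_eq_card_filter (w.take t) D D, count_eq_card_filter (w.take t) D U,
    show (w.take t).length = t by rw [List.length_take]; omega]
  choose! g hg1 hg2 hg3 hg4 using fun (i : ℕ) (hi : i < l.length) => hl.partner hi
  have hsD : (Finset.range t).filter (fun i => (w.take t).getD i D = D) =
      (Finset.range t).filter (fun i => w.getD i D = D) :=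
    Finset.filter_congr fun i hi => by rw [hget i (Finset.mem_range.mp hi)]
  have hsU : (Finset.range t).filter (fun i => (w.take t).getD i D = U) =
      (Finset.range t).filter (fun i => w.getD i D = U) :=
    Finset.filter_congr fun i hi => by rw [hget i (Finset.mem_range.mp hi)]
  rw [hsD, hsU]
  apply Finset.card_le_card_of_injOn g
  · intro i hi
    rw [Finset.mem_coe, Finset.mem_filter, Finset.mem_range] at hi ⊢
    have hil : i < l.length := by omega
    have hnfo : ¬ FO l i := by
      intro hfo
      have := (hl.2.2.2.2.2 i).mpr hfo
      rw [hi.2] at this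
      exact absurd this (by simp)
    have hgi : g i < i := by
      have := Pl.fo_iff_lt hil (hg1 i hil) (hg2 i hil) (hg3 i hil) (hg4 i hil)
      rcases lt_trichotomy (g i) i with h | h | h
      · exact h
      · exact absurd h (hg2 i hil)
      · exact absurd (this.mpr h) hnfo
    have hfog : FO l (g i) := ⟨i, hgi, hil, (hg3 i hil).symm⟩
    exact ⟨by omega, (hl.2.2.2.2.2 (g i)).mpr hfog⟩
  · intro i hi i' hi' he
    rw [Finset.mem_coe, Finset.mem_filter, Finset.mem_range] at hi hi'
    have hil : i < l.length := by omega
    have hil' : i' < l.length := by omega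
    have hnfo : ¬ FO l i' := by
      intro hfo
      have := (hl.2.2.2.2.2 i').mpr hfo
      rw [hi'.2] at this
      exact absurd this (by simp)
    have hv : l.getD i' 0 = l.getD i 0 := by
      have e1 := hg3 i hil
      have e2 := hg3 i' hil'
      rw [← e1, ← e2, he]
    rcases hg4 i hil i' hil' hv with h | h
    · exact h.symm
    · exfalso
      have hgi' : g i' < i' := by
        have := Pl.fo_iff_lt hil' (hg1 i' hil') (hg2 i' hil') (hg3 i' hil') (hg4 i' hil')
        rcases lt_trichotomy (g i') i' with h2 | h2 | h2
        · exact h2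
        · exact absurd h2 (hg2 i' hil')
        · exact absurd (this.mpr h2) hnfo
      exact hnfo ⟨g i, by omega, hg1 i hil, by rw [hg3 i hil, hv]⟩

omit hl in
/-- package a `Pl` witness's word as a DyckWord -/
def Pl.toDyck (hl : Pl w n c l) : DyckWord where
  toList := w
  count_U_eq_count_D := by
    have h1 := hl.countU
    have h2 := countU_add_countD w
    have h3 := hl.wlen
    omega
  count_D_le_count_U i := hl.prefixLe i

lemma Pl.semilength_toDyck : (hl.toDyck).semilength = n := by
  have := hl.countU
  simpa [DyckWord.semilength, Pl.toDyck] using this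

end PlFacts

lemma assemble {w₁ w₂ : List DyckStep} {n₁ n₂ c : ℕ} {l₁ l₂ : List ℕ}
    (h₁ : Pl w₁ n₁ (c + n₂) l₁) (h₂ : Pl w₂ n₂ c l₂) :
    Pl (U :: (w₁ ++ D :: w₂)) (n₁ + n₂ + 1) c
       ((c + n₁ + n₂) :: (l₁ ++ (c + n₁ + n₂) :: l₂)) := by
  set M := c + n₁ + n₂ with hM
  set L := M :: (l₁ ++ M :: l₂) with hL
  set w := U :: (w₁ ++ D :: w₂) with hw
  set N := n₁ + n₂ + 1 with hN
  have len1 : l₁.length = 2*n₁ := h₁.len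
  have len2 : l₂.length = 2*n₂ := h₂.len
  have wlen1 : w₁.length = 2*n₁ := h₁.wlen
  have wlen2 : w₂.length = 2*n₂ := h₂.wlen
  have Llen : L.length = 2*N := by simp [hL, len1, len2, hN]; omega
  have wlen : w.length = 2*N := by simp [hw, wlen1, wlen2, hN]; omega
  -- getD descriptions of L
  have g0 : L.getD 0 0 = M := rfl
  have gI : ∀ t, 0 < t → t ≤ 2*n₁ → L.getD t 0 = l₁.getD (t-1) 0 := by
    intro t h1 h2
    obtain ⟨s, rfl⟩ := Nat.exists_eq_add_of_lt h1
    rw [hL, show 0 + s + 1 = s + 1 by omega, List.getD_cons_succ,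
      List.getD_append _ _ _ _ (by omega)]
    congr 1
  have gb : L.getD (2*n₁+1) 0 = M := by
    rw [hL, List.getD_cons_succ, List.getD_append_right _ _ _ _ (by omega), len1,
      Nat.sub_self, List.getD_cons_zero]
  have gT : ∀ t, 2*n₁+1 < t → L.getD t 0 = l₂.getD (t - (2*n₁+2)) 0 := by
    intro t h1
    obtain ⟨s, rfl⟩ := Nat.exists_eq_add_of_lt (show 0 < t by omega)
    rw [hL, show 0 + s + 1 = s + 1 by omega, List.getD_cons_succ,
      List.getD_append_right _ _ _ _ (by omega), len1,
      show s - 2*n₁ = (s - 2*n₁ - 1) + 1 by omega, List.getD_cons_succ]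
    congr 1
    omega
  -- getD descriptions of w
  have W0 : w.getD 0 D = U := rfl
  have WI : ∀ t, 0 < t → t ≤ 2*n₁ → w.getD t D = w₁.getD (t-1) D := by
    intro t h1 h2
    obtain ⟨s, rfl⟩ := Nat.exists_eq_add_of_lt h1
    rw [hw, show 0 + s + 1 = s + 1 by omega, List.getD_cons_succ,
      List.getD_append _ _ _ _ (by omega)]
    congr 1
  have Wb : w.getD (2*n₁+1) D = D := by
    rw [hw, List.getD_cons_succ, List.getD_append_right _ _ _ _ (by omega), wlen1,
      Nat.sub_self, List.getD_cons_zero]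
  have WT : ∀ t, 2*n₁+1 < t → w.getD t D = w₂.getD (t - (2*n₁+2)) D := by
    intro t h1
    obtain ⟨s, rfl⟩ := Nat.exists_eq_add_of_lt (show 0 < t by omega)
    rw [hw, show 0 + s + 1 = s + 1 by omega, List.getD_cons_succ,
      List.getD_append_right _ _ _ _ (by omega), wlen1,
      show s - 2*n₁ = (s - 2*n₁ - 1) + 1 by omega, List.getD_cons_succ]
    congr 1
    omega
  -- value ranges
  have vI : ∀ t, 0 < t → t ≤ 2*n₁ → c + n₂ ≤ L.getD t 0 ∧ L.getD t 0 < M := by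
    intro t h1 h2
    rw [gI t h1 h2]
    have := h₁.bound (i := t-1) (by omega)
    omega
  have vT : ∀ t, 2*n₁+1 < t → t < 2*N → c ≤ L.getD t 0 ∧ L.getD t 0 < c + n₂ := by
    intro t h1 h2
    rw [gT t h1]
    have := h₂.bound (i := t - (2*n₁+2)) (by omega)
    omega
  -- region classification for equal values
  have claimA : ∀ s t, s < t → t < 2*N → L.getD s 0 = L.getD t 0 →
      (s = 0 ∧ t = 2*n₁+1) ∨ (0 < s ∧ t ≤ 2*n₁) ∨ (2*n₁+1 < s) := by
    intro s t hst ht hv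
    rcases show s = 0 ∨ (0 < s ∧ s ≤ 2*n₁) ∨ s = 2*n₁+1 ∨ 2*n₁+1 < s by omega with
      hs | hs | hs | hs
    · subst hs
      rw [g0] at hv
      rcases show (0 < t ∧ t ≤ 2*n₁) ∨ t = 2*n₁+1 ∨ 2*n₁+1 < t by omega with ht' | ht' | ht'
      · have := vI t ht'.1 ht'.2; omega
      · exact Or.inl ⟨rfl, ht'⟩
      · have := vT t ht' ht; omega
    · have hvs := vI s hs.1 hs.2
      rcases show (0 < t ∧ t ≤ 2*n₁) ∨ t = 2*n₁+1 ∨ 2*n₁+1 < t by omega with ht' | ht' | ht'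
      · exact Or.inr (Or.inl ⟨hs.1, ht'.2⟩)
      · subst ht'; rw [gb] at hv; omega
      · have := vT t ht' ht; omega
    · subst hs
      rw [gb] at hv
      have := vT t hst ht
      omega
    · exact Or.inr (Or.inr hs)
  refine ⟨by omega, Llen, ?_, ?_, ?_, ?_⟩
  · -- counts
    intro k
    have e1 := h₁.2.2.1 k
    have e2 := h₂.2.2.1 k
    rw [hL, List.count_cons, List.count_append, List.count_cons, e1, e2, hM, hN]
    simp only [beq_iff_eq]
    split_ifs <;> omega
  · -- NCl
    intro i j k m hij hjk hkm hm hik hjm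
    rw [Llen] at hm
    rcases claimA i k (by omega) (by omega) hik with hc | hc | hc
    · -- i = 0, k = b : impossible via (j,m)
      exfalso
      rcases claimA j m (by omega) (by omega) hjm with hd | hd | hd <;> omega
    · -- all interior
      rcases claimA j m (by omega) (by omega) hjm with hd | hd | hd
      · omega
      · -- indices i,j,k,m interior
        have hi' : 0 < i := hc.1
        have hm2 : m ≤ 2*n₁ := hd.2
        rw [gI i (by omega) (by omega), gI j (by omega) (by omega)]
        rw [gI i (by omega) (by omega), gI k (by omega) (by omega)] at hik
        rw [gI j (by omega) (by omega), gI m (by omega) (by omega)] at hjm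
        exact h₁.2.2.2.1 (i-1) (j-1) (k-1) (m-1) (by omega) (by omega) (by omega)
          (by omega) hik hjm
      · omega
    · -- all tail
      rcases claimA j m (by omega) (by omega) hjm with hd | hd | hd
      · omega
      · omega
      · rw [gT i (by omega), gT j (by omega)]
        rw [gT i (by omega), gT k (by omega)] at hik
        rw [gT j (by omega), gT m (by omega)] at hjm
        exact h₂.2.2.2.1 (i-(2*n₁+2)) (j-(2*n₁+2)) (k-(2*n₁+2)) (m-(2*n₁+2))
          (by omega) (by omega) (by omega) (by omega) hik hjm
  · -- A122l
    intro i j k hij hjk hk hjkv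
    rw [Llen] at hk
    rcases claimA j k (by omega) (by omega) hjkv with hc | hc | hc
    · omega
    · -- j,k interior
      have hvj := vI j (by omega) (by omega)
      rcases show i = 0 ∨ (0 < i ∧ i ≤ 2*n₁) by omega with hi | hi
      · subst hi; rw [g0]; omega
      · rw [gI i hi.1 hi.2, gI j (by omega) (by omega)]
        rw [gI j (by omega) (by omega), gI k (by omega) (by omega)] at hjkv
        exact h₁.2.2.2.2.1 (i-1) (j-1) (k-1) (by omega) (by omega) (by omega) hjkv
    · -- j,k tail
      have hvj := vT j (by omega) (by omega)
      rcases show i = 0 ∨ (0 < i ∧ i ≤ 2*n₁) ∨ i = 2*n₁+1 ∨ 2*n₁+1 < i by omega with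
        hi | hi | hi | hi
      · subst hi; rw [g0]; omega
      · have := vI i hi.1 hi.2; omega
      · subst hi; rw [gb]; omega
      · rw [gT i (by omega), gT j (by omega)]
        rw [gT j (by omega), gT k (by omega)] at hjkv
        exact h₂.2.2.2.2.1 (i-(2*n₁+2)) (j-(2*n₁+2)) (k-(2*n₁+2)) (by omega) (by omega)
          (by omega) hjkv
  · -- word clause
    intro i
    rcases show i = 0 ∨ (0 < i ∧ i ≤ 2*n₁) ∨ i = 2*n₁+1 ∨ (2*n₁+1 < i ∧ i < 2*N) ∨ 2*N ≤ i
      by omega with hi | hi | hi | hi | hi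
    · subst hi
      rw [W0]
      simp only [true_iff]
      exact ⟨2*n₁+1, by omega, by omega, by rw [gb, g0]⟩
    · rw [WI i hi.1 hi.2, h₁.2.2.2.2.2 (i-1)]
      constructor
      · rintro ⟨j, hj1, hj2, hj3⟩
        exact ⟨j+1, by omega, by omega,
          by rw [gI (j+1) (by omega) (by omega), gI i hi.1 hi.2]; simpa using hj3⟩
      · rintro ⟨j, hj1, hj2, hj3⟩
        rw [Llen] at hj2
        rcases claimA i j hj1 hj2 hj3.symm with hc | hc | hc
        · omega
        · exact ⟨j-1, by omega, by omega,
            by rw [← gI j (by omega) (by omega), ← gI i hi.1 hi.2]; exact hj3⟩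
        · omega
    · subst hi
      rw [Wb]
      simp only [reduceCtorEq, false_iff]
      rintro ⟨j, hj1, hj2, hj3⟩
      rw [Llen] at hj2
      rcases claimA (2*n₁+1) j hj1 hj2 hj3.symm with hc | hc | hc <;> omega
    · rw [WT i hi.1, h₂.2.2.2.2.2 (i-(2*n₁+2))]
      constructor
      · rintro ⟨j, hj1, hj2, hj3⟩
        refine ⟨j + (2*n₁+2), by omega, by omega, ?_⟩
        rw [gT (j + (2*n₁+2)) (by omega), gT i (by omega)]
        simpa using hj3
      · rintro ⟨j, hj1, hj2, hj3⟩
        rw [Llen] at hj2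
        refine ⟨j - (2*n₁+2), by omega, by omega, ?_⟩
        rw [← gT j (by omega), ← gT i (by omega)]
        exact hj3
    · constructor
      · intro h
        rw [List.getD_eq_default _ _ (by omega)] at h
        exact absurd h (by simp)
      · rintro ⟨j, hj1, hj2, hj3⟩
        rw [Llen] at hj2
        omega

lemma getD_take_drop (l : List ℕ) (s t i : ℕ) (hi : i < t) :
    ((l.drop s).take t).getD i 0 = l.getD (s+i) 0 := by
  rcases lt_or_ge (s+i) l.length with h | h
  · rw [List.getD_eq_getElem _ _ (by simp [List.length_take, List.length_drop]; omega),
      List.getElem_take, List.getElem_drop, List.getD_eq_getElem _ _ h]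
  · rw [List.getD_eq_default _ _ (by simp [List.length_take, List.length_drop]; omega),
      List.getD_eq_default _ _ h]

lemma take_one_drop (l : List ℕ) (s : ℕ) (h : s < l.length) :
    (l.drop s).take 1 = [l.getD s 0] := by
  apply List.ext_getElem
  · simp [List.length_take, List.length_drop]; omega
  · intro i h1 h2
    simp only [List.length_take, List.length_drop, lt_min_iff] at h1
    have hi : i = 0 := by omega
    subst hi
    simp only [List.getElem_take, List.getElem_drop]
    rw [List.getD_eq_getElem _ _ (by omega)]
    simp

lemma NCl_seg {l : List ℕ} (h : NCl l) (s t : ℕ) : NCl ((l.drop s).take t) := by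
  intro i j k m hij hjk hkm hm hik hjm
  have hlen : ((l.drop s).take t).length = min t (l.length - s) := by
    simp [List.length_take, List.length_drop]
  rw [hlen] at hm
  rw [getD_take_drop l s t i (by omega), getD_take_drop l s t j (by omega)]
  rw [getD_take_drop l s t i (by omega), getD_take_drop l s t k (by omega)] at hik
  rw [getD_take_drop l s t j (by omega), getD_take_drop l s t m (by omega)] at hjm
  exact h (s+i) (s+j) (s+k) (s+m) (by omega) (by omega) (by omega) (by omega) hik hjm

lemma A122l_seg {l : List ℕ} (h : A122l l) (s t : ℕ) : A122l ((l.drop s).take t) := by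
  intro i j k hij hjk hk hjkv
  have hlen : ((l.drop s).take t).length = min t (l.length - s) := by
    simp [List.length_take, List.length_drop]
  rw [hlen] at hk
  rw [getD_take_drop l s t j (by omega), getD_take_drop l s t i (by omega)]
  rw [getD_take_drop l s t j (by omega), getD_take_drop l s t k (by omega)] at hjkv
  exact h (s+i) (s+j) (s+k) (by omega) (by omega) (by omega) hjkv

lemma mem_seg {l : List ℕ} {s t : ℕ} {k : ℕ} :
    k ∈ (l.drop s).take t ↔ ∃ i, i < t ∧ i < l.length - s ∧ l.getD (s+i) 0 = k := by
  rw [List.mem_iff_getElem]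
  constructor
  · rintro ⟨i, hi, hv⟩
    have hi' : i < min t (l.length - s) := by
      simpa [List.length_take, List.length_drop] using hi
    refine ⟨i, by omega, by omega, ?_⟩
    rw [← getD_take_drop l s t i (by omega), List.getD_eq_getElem _ _ hi, hv]
  · rintro ⟨i, h1, h2, hv⟩
    refine ⟨i, by simp [List.length_take, List.length_drop]; omega, ?_⟩
    rw [← List.getD_eq_getElem _ 0 (by simp [List.length_take, List.length_drop]; omega),
      getD_take_drop l s t i h1, hv]

lemma countU_of_bal {w₁ : List DyckStep} {n₁ : ℕ} (hbal : w₁.count U = w₁.count D)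
    (hlen : w₁.length = 2*n₁) : w₁.count U = n₁ := by
  have := countU_add_countD w₁
  omega

lemma split {w₁ w₂ : List DyckStep} {n₁ n₂ c : ℕ} {l : List ℕ}
    (hbal₁ : w₁.count U = w₁.count D)
    (hpre₁ : ∀ i, (w₁.take i).count D ≤ (w₁.take i).count U)
    (hw₁len : w₁.length = 2*n₁) (hw₂len : w₂.length = 2*n₂)
    (hl : Pl (U :: (w₁ ++ D :: w₂)) (n₁+n₂+1) c l) :
    Pl w₁ n₁ (c+n₂) ((l.drop 1).take (2*n₁)) ∧ Pl w₂ n₂ c ((l.drop (2*n₁+2)).take (2*n₂)) ∧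
      l = (c+n₁+n₂) :: (((l.drop 1).take (2*n₁)) ++
        (c+n₁+n₂) :: ((l.drop (2*n₁+2)).take (2*n₂))) := by
  classical
  set M := c + n₁ + n₂ with hM
  set N := n₁ + n₂ + 1 with hN
  set w := U :: (w₁ ++ D :: w₂) with hw
  have hll : l.length = 2*N := hl.len
  have hwl : w.length = 2*N := hl.wlen
  have hcUw₁ : w₁.count U = n₁ := countU_of_bal hbal₁ hw₁len
  -- getD descriptions of w
  have W0 : w.getD 0 D = U := rfl
  have WI : ∀ t, 0 < t → t ≤ 2*n₁ → w.getD t D = w₁.getD (t-1) D := by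
    intro t h1 h2
    obtain ⟨s, rfl⟩ := Nat.exists_eq_add_of_lt h1
    rw [hw, show 0 + s + 1 = s + 1 by omega, List.getD_cons_succ,
      List.getD_append _ _ _ _ (by omega)]
    congr 1
  have Wb : w.getD (2*n₁+1) D = D := by
    rw [hw, List.getD_cons_succ, List.getD_append_right _ _ _ _ (by omega), hw₁len,
      Nat.sub_self, List.getD_cons_zero]
  have WT : ∀ t, 2*n₁+1 < t → w.getD t D = w₂.getD (t - (2*n₁+2)) D := by
    intro t h1
    obtain ⟨s, rfl⟩ := Nat.exists_eq_add_of_lt (show 0 < t by omega)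
    rw [hw, show 0 + s + 1 = s + 1 by omega, List.getD_cons_succ,
      List.getD_append_right _ _ _ _ (by omega), hw₁len,
      show s - 2*n₁ = (s - 2*n₁ - 1) + 1 by omega, List.getD_cons_succ]
    congr 1
    omega
  -- partner machinery
  choose! g hg1 hg2 hg3 hg4 using fun (i : ℕ) (hi : i < l.length) => hl.partner hi
  have foiff : ∀ t, t < l.length → (FO l t ↔ t < g t) := fun t ht =>
    Pl.fo_iff_lt ht (hg1 t ht) (hg2 t ht) (hg3 t ht) (hg4 t ht)
  have hl0len : (0:ℕ) < l.length := by omega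
  -- D/U position facts
  have hDfact : ∀ i, i < l.length → w.getD i D = D → g i < i ∧ FO l (g i) ∧ ¬ FO l i := by
    intro i hi hD
    have hnfo : ¬ FO l i := by
      intro hfo
      have := (hl.2.2.2.2.2 i).mpr hfo
      rw [hD] at this; exact absurd this (by simp)
    have hgi : g i < i := by
      rcases lt_trichotomy (g i) i with h' | h' | h'
      · exact h'
      · exact absurd h' (hg2 i hi)
      · exact absurd ((foiff i hi).mpr h') hnfo
    exact ⟨hgi, ⟨i, hgi, hi, (hg3 i hi).symm⟩, hnfo⟩
  have hUfact : ∀ i, i < l.length → w.getD i D = U → i < g i ∧ FO l i ∧ ¬ FO l (g i) := by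
    intro i hi hU
    have hfo : FO l i := (hl.2.2.2.2.2 i).mp hU
    have hgi : i < g i := (foiff i hi).mp hfo
    refine ⟨hgi, hfo, ?_⟩
    rintro ⟨j, hj1, hj2, hj3⟩
    have : l.getD j 0 = l.getD i 0 := by rw [hj3, hg3 i hi]
    rcases hg4 i hi j hj2 this with rfl | rfl <;> omega
  have hginj : ∀ i i', i < l.length → i' < l.length → g i = g i' →
      (FO l i ↔ FO l i') → i = i' := by
    intro i i' hi hi' he hfo
    have hv : l.getD i' 0 = l.getD i 0 := by rw [← hg3 i hi, ← hg3 i' hi', he]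
    rcases hg4 i hi i' hi' hv with h' | h'
    · exact h'.symm
    · exfalso
      subst h'
      -- i' = g i ; then FO l i ↔ FO l (g i), but exactly one of them holds
      rcases lt_trichotomy i (g i) with h2 | h2 | h2
      · have f1 : FO l i := ⟨g i, h2, hg1 i hi, hg3 i hi⟩
        have f2 : FO l (g i) := hfo.mp f1
        obtain ⟨j, hj1, hj2, hj3⟩ := f2
        have : l.getD j 0 = l.getD i 0 := by rw [hj3, hg3 i hi]
        rcases hg4 i hi j hj2 this with rfl | rfl <;> omega
      · exact (hg2 i hi) h2.symm
      · have f1 : FO l (g i) := ⟨i, h2, hi, (hg3 i hi).symm⟩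
        have f2 : FO l i := hfo.mpr f1
        obtain ⟨j, hj1, hj2, hj3⟩ := f1
        obtain ⟨j', hj1', hj2', hj3'⟩ := f2
        rcases hg4 i hi j' hj2' hj3' with rfl | rfl <;> omega
  -- step 1 : l₀ = M
  have hFO0 : FO l 0 := (hl.2.2.2.2.2 0).mp W0
  have hM0 : l.getD 0 0 = M := by
    have := hl.key hFO0
    simp only [List.take_zero, List.count_nil] at this
    omega
  set p := g 0 with hp
  have hppos : 0 < p := (foiff 0 hl0len).mp hFO0
  have hplen : p < l.length := hg1 0 hl0len
  have hMp : l.getD p 0 = M := by rw [hp, hg3 0 hl0len, hM0]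
  have hMuni : ∀ t, t < l.length → l.getD t 0 = M → t = 0 ∨ t = p := by
    intro t ht hv
    exact hg4 0 hl0len t ht (by rw [hv, hM0])
  have hnFOp : ¬ FO l p := by
    rintro ⟨j, hj1, hj2, hj3⟩
    rcases hMuni j hj2 (by rw [hj3, hMp]) with rfl | rfl <;> omega
  have hWp : w.getD p D = D := by
    cases hcase : w.getD p D
    · exact absurd ((hl.2.2.2.2.2 p).mp hcase) hnFOp
    · rfl
  -- interior closure for (0, p)
  have hint : ∀ t, 0 < t → t < p → 0 < g t ∧ g t < p := by
    intro t h1 h2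
    have htlen : t < l.length := by omega
    have hvt : l.getD t 0 ≠ M := by
      intro hv
      rcases hMuni t htlen hv with rfl | rfl <;> omega
    have hq1 : g t ≠ 0 := by
      intro h0
      apply hvt
      rw [← hg3 t htlen, h0, hM0]
    have hq2 : g t ≠ p := by
      intro h0
      apply hvt
      rw [← hg3 t htlen, h0, hMp]
    refine ⟨by omega, ?_⟩
    by_contra hgt
    push_neg at hgt
    have hgtp : p < g t := by
      rcases lt_or_eq_of_le hgt with h' | h'
      · exact h'
      · exact absurd h'.symm hq2
    have := hl.2.2.2.1 0 t p (g t) h1 h2 hgtp (hg1 t htlen)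
      (by rw [hM0, hMp]) (hg3 t htlen).symm
    rw [hM0] at this
    exact hvt this.symm
  -- count translations on prefixes of w
  have hcount_take : ∀ t, t ≤ 2*N → ∀ a : DyckStep, (w.take t).count a =
      ((Finset.range t).filter (fun i => w.getD i D = a)).card := by
    intro t ht a
    rw [count_eq_card_filter (w.take t) D a, show (w.take t).length = t by
      rw [List.length_take]; omega]
    congr 1
    apply Finset.filter_congr
    intro i hi
    rw [Finset.mem_range] at hi
    rw [List.getD_eq_getElem _ _ (by rw [List.length_take]; omega), List.getElem_take,
      List.getD_eq_getElem w D (by omega)]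
  -- F3 strict : 0 < t ≤ p → #D < #U on take t
  have F3 : ∀ t, 0 < t → t ≤ p → (w.take t).count D < (w.take t).count U := by
    intro t h1 h2
    rw [hcount_take t (by omega) D, hcount_take t (by omega) U]
    have hsub : ((Finset.range t).filter (fun i => w.getD i D = D)).card ≤
        (((Finset.range t).filter (fun i => w.getD i D = U)).erase 0).card := by
      apply Finset.card_le_card_of_injOn g
      · intro i hi
        rw [Finset.mem_coe, Finset.mem_filter, Finset.mem_range] at hi
        have hil : i < l.length := by omega
        obtain ⟨hgi, hfog, hnfo⟩ := hDfact i hil hi.2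
        have hi0 : i ≠ 0 := by
          intro h0; rw [h0, W0] at hi; exact absurd hi.2 (by simp)
        have hvi : l.getD i 0 ≠ M := by
          intro hv
          rcases hMuni i hil hv with rfl | rfl <;> omega
        have hgne0 : g i ≠ 0 := by
          intro h0
          apply hvi
          rw [← hg3 i hil, h0, hM0]
        rw [Finset.mem_coe, Finset.mem_erase, Finset.mem_filter, Finset.mem_range]
        exact ⟨hgne0, by omega, (hl.2.2.2.2.2 (g i)).mpr hfog⟩
      · intro i hi i' hi' he
        rw [Finset.mem_coe, Finset.mem_filter, Finset.mem_range] at hi hi'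
        exact hginj i i' (by omega) (by omega) he
          (by
            have h1' := (hDfact i (by omega) hi.2).2.2
            have h2' := (hDfact i' (by omega) hi'.2).2.2
            tauto)
    have h0U : (0:ℕ) ∈ (Finset.range t).filter (fun i => w.getD i D = U) := by
      rw [Finset.mem_filter, Finset.mem_range]
      exact ⟨h1, W0⟩
    have hce := Finset.card_erase_of_mem h0U
    have hpos : 0 < ((Finset.range t).filter (fun i => w.getD i D = U)).card :=
      Finset.card_pos.mpr ⟨0, h0U⟩
    omega
  -- F2 : prefix strictly positive up to 2n₁+1 from w₁'s Dyck property
  have F2 : ∀ t, 0 < t → t ≤ 2*n₁+1 → (w.take t).count D < (w.take t).count U := by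
    intro t h1 h2
    obtain ⟨s, rfl⟩ := Nat.exists_eq_add_of_lt h1
    rw [hw, show 0 + s + 1 = s + 1 by omega, List.take_succ_cons,
      List.take_append_of_le_length (by omega)]
    have := hpre₁ s
    simp only [List.count_cons, beq_iff_eq, reduceCtorEq, if_false, if_true]
    omega
  -- F1 : balanced at 2n₁+2
  have F1 : (w.take (2*n₁+2)).count U = (w.take (2*n₁+2)).count D := by
    rw [hw, show 2*n₁+2 = (2*n₁+1) + 1 by omega, List.take_succ_cons,
      List.take_append, List.take_of_length_le (by omega), hw₁len,
      show 2*n₁+1 - 2*n₁ = 1 by omega]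
    simp only [List.count_cons, List.count_append, List.take_succ_cons, List.take_zero,
      List.count_nil, beq_iff_eq, reduceCtorEq, if_false, if_true]
    omega
  -- F4 : balanced at p+1
  have F4 : (w.take (p+1)).count U = (w.take (p+1)).count D := by
    have hle1 : (w.take (p+1)).count D ≤ (w.take (p+1)).count U := hl.prefixLe (p+1)
    have hle2 : (w.take (p+1)).count U ≤ (w.take (p+1)).count D := by
      rw [hcount_take (p+1) (by omega) D, hcount_take (p+1) (by omega) U]
      apply Finset.card_le_card_of_injOn g
      · intro i hi
        rw [Finset.mem_coe, Finset.mem_filter, Finset.mem_range] at hi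
        have hil : i < l.length := by omega
        obtain ⟨hgi, hfo, hnfog⟩ := hUfact i hil hi.2
        have hip : i ≠ p := by
          intro h0; rw [h0, hWp] at hi; exact absurd hi.2 (by simp)
        have hglp : g i ≤ p := by
          rcases Nat.eq_zero_or_pos i with rfl | hi0
          · rw [← hp]
          · exact le_of_lt (hint i hi0 (by omega)).2
        have hWgi : w.getD (g i) D = D := by
          cases hcase : w.getD (g i) D
          · exact absurd ((hl.2.2.2.2.2 (g i)).mp hcase) hnfog
          · rfl
        rw [Finset.mem_coe, Finset.mem_filter, Finset.mem_range]
        exact ⟨by omega, hWgi⟩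
      · intro i hi i' hi' he
        rw [Finset.mem_coe, Finset.mem_filter, Finset.mem_range] at hi hi'
        exact hginj i i' (by omega) (by omega) he
          (by
            have h1' := (hUfact i (by omega) hi.2).2.1
            have h2' := (hUfact i' (by omega) hi'.2).2.1
            tauto)
    omega
  -- p = 2n₁+1
  have hpb : p = 2*n₁+1 := by
    rcases lt_trichotomy p (2*n₁+1) with h' | h' | h'
    · have := F2 (p+1) (by omega) (by omega)
      omega
    · exact h'
    · have := F3 (2*n₁+2) (by omega) (by omega)
      omega
  -- tail closure
  have htail : ∀ t, 2*n₁+1 < t → t < 2*N → 2*n₁+1 < g t := by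
    intro t h1 h2
    have htlen : t < l.length := by omega
    have hvt : l.getD t 0 ≠ M := by
      intro hv
      rcases hMuni t htlen hv with rfl | rfl <;> omega
    have hq1 : g t ≠ 0 := by
      intro h0; apply hvt; rw [← hg3 t htlen, h0, hM0]
    have hq2 : g t ≠ p := by
      intro h0; apply hvt; rw [← hg3 t htlen, h0, hMp]
    by_contra hgt
    push_neg at hgt
    have hgint : 0 < g t ∧ g t < p := ⟨by omega, by omega⟩
    have h3 := hint (g t) hgint.1 hgint.2
    have : t = g t ∨ t = g (g t) :=
      hg4 (g t) (by omega) t htlen (by rw [hg3 t htlen])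
    rcases this with h' | h'
    · omega
    · omega
  -- value bounds at first occurrences
  have hv_int : ∀ t, 0 < t → t ≤ 2*n₁ → FO l t →
      c + n₂ ≤ l.getD t 0 ∧ l.getD t 0 < c + n₂ + n₁ := by
    intro t h1 h2 hfo
    have hkey := hl.key hfo
    have hWt : w.getD t D = U := (hl.2.2.2.2.2 t).mpr hfo
    have hw₁t : w₁.getD (t-1) D = U := by rw [← WI t h1 h2]; exact hWt
    have htake : w.take t = U :: w₁.take (t-1) := by
      obtain ⟨s, rfl⟩ := Nat.exists_eq_add_of_lt h1
      rw [hw, show 0 + s + 1 = s + 1 by omega, List.take_succ_cons,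
        List.take_append_of_le_length (by omega)]
      simp
    have hcu : (w.take t).count U = 1 + (w₁.take (t-1)).count U := by
      rw [htake]
      simp [List.count_cons]
      omega
    have hub : (w₁.take (t-1)).count U + 1 ≤ n₁ := by
      have hsplit : w₁.count U = (w₁.take (t-1)).count U + (w₁.drop (t-1)).count U := by
        rw [← List.count_append, List.take_append_drop]
      have hmem : U ∈ w₁.drop (t-1) := by
        rw [List.mem_iff_getElem]
        exact ⟨0, by rw [List.length_drop]; omega, by
          rw [List.getElem_drop, ← List.getD_eq_getElem w₁ D (by omega)]
          simpa using hw₁t⟩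
      have := List.count_pos_iff.mpr hmem
      omega
    constructor
    · omega
    · have hlb : 1 ≤ (w.take t).count U := by omega
      omega
  have hv_tail : ∀ t, 2*n₁+1 < t → FO l t → l.getD t 0 < c + n₂ := by
    intro t h1 hfo
    have hkey := hl.key hfo
    have htlen : t < l.length := by
      obtain ⟨j, hj1, hj2, _⟩ := hfo; omega
    have hucount : n₁ + 1 ≤ (w.take t).count U := by
      have hpref : (w.take (2*n₁+2)).count U ≤ (w.take t).count U := by
        have : w.take (2*n₁+2) = (w.take t).take (2*n₁+2) := by
          rw [List.take_take, min_eq_left (by omega)]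
        rw [this]
        exact (List.take_sublist _ _).count_le U
      have hF1' : (w.take (2*n₁+2)).count U = n₁ + 1 := by
        rw [hw, show 2*n₁+2 = (2*n₁+1) + 1 by omega, List.take_succ_cons,
          List.take_append, List.take_of_length_le (by omega), hw₁len,
          show 2*n₁+1 - 2*n₁ = 1 by omega]
        simp only [List.count_cons, List.count_append, List.take_succ_cons, List.take_zero,
          List.count_nil, beq_iff_eq, reduceCtorEq, if_false, if_true]
        omega
      omega
    omega
  -- the segments
  set I1 := (l.drop 1).take (2*n₁) with hI1
  set I2 := (l.drop (2*n₁+2)).take (2*n₂) with hI2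
  have hI1len : I1.length = 2*n₁ := by
    rw [hI1, List.length_take, List.length_drop]; omega
  have hI2len : I2.length = 2*n₂ := by
    rw [hI2, List.length_take, List.length_drop]; omega
  -- reassembly
  have hre : l = M :: (I1 ++ M :: I2) := by
    conv_lhs => rw [← List.take_append_drop 1 l]
    have e0 : l.take 1 = [M] := by
      have := take_one_drop l 0 (by omega)
      rw [List.drop_zero] at this
      rw [this, hM0]
    have e1 : l.drop 1 = I1 ++ l.drop (2*n₁+1) := by
      conv_lhs => rw [← List.take_append_drop (2*n₁) (l.drop 1)]
      rw [List.drop_drop, show 1 + 2*n₁ = 2*n₁+1 by omega]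
    have e2 : l.drop (2*n₁+1) = M :: I2 := by
      conv_lhs => rw [← List.take_append_drop 1 (l.drop (2*n₁+1))]
      rw [List.drop_drop, take_one_drop l (2*n₁+1) (by omega)]
      rw [show l.getD (2*n₁+1) 0 = M by rw [← hpb]; exact hMp]
      rw [show 2*n₁+1+1 = 2*n₁+2 by omega]
      rw [show l.drop (2*n₁+2) = I2 by
        rw [hI2, List.take_of_length_le (by rw [List.length_drop]; omega)]]
      rfl
    rw [e0, e1, e2]
    rfl
  -- segment getD
  have gI1 : ∀ i, i < 2*n₁ → I1.getD i 0 = l.getD (1+i) 0 := by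
    intro i hi; rw [hI1]; exact getD_take_drop l 1 (2*n₁) i hi
  have gI2 : ∀ i, i < 2*n₂ → I2.getD i 0 = l.getD (2*n₁+2+i) 0 := by
    intro i hi; rw [hI2]; exact getD_take_drop l (2*n₁+2) (2*n₂) i hi
  -- zero counts
  have hI1zero : ∀ k, ¬(c+n₂ ≤ k ∧ k < c+n₂+n₁) → I1.count k = 0 := by
    intro k hk
    rw [List.count_eq_zero]
    intro hmem
    rw [hI1, mem_seg] at hmem
    obtain ⟨i, hi1, hi2, hiv⟩ := hmem
    have hpos : 1+i < l.length := by omega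
    have hbd := hl.bound hpos
    rw [hiv] at hbd
    have hkM : k ≠ M := by
      intro h0
      rcases hMuni (1+i) hpos (by rw [hiv, h0]) with h' | h' <;> omega
    have hklt : k < c + n₂ := by omega
    obtain ⟨a, b', hab, hb'len, ha', hb'', huni⟩ := hl.pair hbd.1 hbd.2
    have hfoa : FO l a := ⟨b', hab, hb'len, by rw [hb'', ha']⟩
    have ha0 : a ≠ 0 := by
      intro h0; rw [h0, hM0] at ha'; exact hkM ha'.symm
    have haint : 0 < a ∧ a ≤ 2*n₁ := by
      rcases huni (1+i) hpos hiv with h' | h' <;> omega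
    have := hv_int a haint.1 haint.2 hfoa
    omega
  have hI2zero : ∀ k, ¬(c ≤ k ∧ k < c+n₂) → I2.count k = 0 := by
    intro k hk
    rw [List.count_eq_zero]
    intro hmem
    rw [hI2, mem_seg] at hmem
    obtain ⟨i, hi1, hi2, hiv⟩ := hmem
    have hpos : 2*n₁+2+i < l.length := by omega
    have hbd := hl.bound hpos
    rw [hiv] at hbd
    have hkM : k ≠ M := by
      intro h0
      rcases hMuni (2*n₁+2+i) hpos (by rw [hiv, h0]) with h' | h' <;> omega
    have hkge : c + n₂ ≤ k := by omega
    -- first occurrence a of value k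
    obtain ⟨a, b', hab, hb'len, ha', hb'', huni⟩ := hl.pair hbd.1 hbd.2
    have hfoa : FO l a := ⟨b', hab, hb'len, by rw [hb'', ha']⟩
    have ha0 : a ≠ 0 := by
      intro h0; rw [h0, hM0] at ha'; exact hkM ha'.symm
    have hap : a ≠ 2*n₁+1 := by
      intro h0; rw [h0, ← hpb, hMp] at ha'; exact hkM ha'.symm
    have hatail : ¬ (2*n₁+1 < a) := by
      intro h1'
      have := hv_tail a h1' hfoa
      rw [ha'] at this
      omega
    have haint : 0 < a ∧ a ≤ 2*n₁ := by omega
    -- partner of a is in the interior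
    have hga := hint a haint.1 (by omega)
    -- b' = g a
    have hb'ga : b' = g a := by
      have := hg4 a (by omega) b' hb'len (by rw [hb'', ha'])
      rcases this with h' | h'
      · omega
      · exact h'
    -- but the tail position 2n₁+2+i is also a position of k
    have := huni (2*n₁+2+i) hpos hiv
    rcases this with h' | h'
    · omega
    · rw [hpb] at hga
      omega
  -- count clauses
  have hcnt := hl.2.2.1
  have hdec : ∀ k, l.count k = (if M = k then 1 else 0) + I1.count k +
      ((if M = k then 1 else 0) + I2.count k) := by
    intro k
    conv_lhs => rw [hre]
    rw [List.count_cons, List.count_append, List.count_cons]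
    simp only [beq_iff_eq]
    omega
  have hcntI1 : ∀ k, I1.count k = if c+n₂ ≤ k ∧ k < (c+n₂) + n₁ then 2 else 0 := by
    intro k
    by_cases hk : c+n₂ ≤ k ∧ k < c+n₂+n₁
    · rw [if_pos (by omega)]
      have h1 := hdec k
      have h2 := hcnt k
      rw [if_pos (by omega)] at h2
      have h3 := hI2zero k (by omega)
      have hMk : M ≠ k := by omega
      rw [if_neg hMk] at h1
      omega
    · rw [if_neg (by omega)]
      exact hI1zero k (by omega)
  have hcntI2 : ∀ k, I2.count k = if c ≤ k ∧ k < c + n₂ then 2 else 0 := by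
    intro k
    by_cases hk : c ≤ k ∧ k < c+n₂
    · rw [if_pos (by omega)]
      have h1 := hdec k
      have h2 := hcnt k
      rw [if_pos (by omega)] at h2
      have h3 := hI1zero k (by omega)
      have hMk : M ≠ k := by omega
      rw [if_neg hMk] at h1
      omega
    · rw [if_neg (by omega)]
      exact hI2zero k (by omega)
  -- word clauses
  have hwc := hl.2.2.2.2.2
  have hwcI1 : ∀ i, w₁.getD i D = U ↔ FO I1 i := by
    intro i
    rcases lt_or_ge i (2*n₁) with hi | hi
    · have e : w₁.getD i D = w.getD (i+1) D := by
        rw [WI (i+1) (by omega) (by omega)]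
        simp
      rw [e, hwc (i+1)]
      constructor
      · intro hfo
        have hlt : i+1 < g (i+1) := (foiff (i+1) (by omega)).mp hfo
        have hgi := hint (i+1) (by omega) (by omega)
        refine ⟨g (i+1) - 1, by omega, by omega, ?_⟩
        rw [gI1 (g (i+1) - 1) (by rw [hpb] at hgi; omega), gI1 i hi,
          show 1 + (g (i+1) - 1) = g (i+1) by omega, show 1+i = i+1 by omega]
        exact hg3 (i+1) (by omega)
      · rintro ⟨j, hj1, hj2, hj3⟩
        rw [hI1len] at hj2
        rw [gI1 j hj2, gI1 i hi] at hj3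
        exact ⟨1+j, by omega, by omega, by
          rw [show i+1 = 1+i by omega]; exact hj3⟩
    · constructor
      · intro h'
        rw [List.getD_eq_default _ _ (by omega)] at h'
        exact absurd h' (by simp)
      · rintro ⟨j, hj1, hj2, hj3⟩
        rw [hI1len] at hj2
        omega
  have hwcI2 : ∀ i, w₂.getD i D = U ↔ FO I2 i := by
    intro i
    rcases lt_or_ge i (2*n₂) with hi | hi
    · have e : w₂.getD i D = w.getD (2*n₁+2+i) D := by
        rw [WT (2*n₁+2+i) (by omega)]
        simp
      rw [e, hwc (2*n₁+2+i)]
      constructor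
      · intro hfo
        have hlt : 2*n₁+2+i < g (2*n₁+2+i) := (foiff (2*n₁+2+i) (by omega)).mp hfo
        have hglen : g (2*n₁+2+i) < l.length := hg1 (2*n₁+2+i) (by omega)
        refine ⟨g (2*n₁+2+i) - (2*n₁+2), by omega, by omega, ?_⟩
        rw [gI2 (g (2*n₁+2+i) - (2*n₁+2)) (by omega), gI2 i hi,
          show 2*n₁+2+(g (2*n₁+2+i) - (2*n₁+2)) = g (2*n₁+2+i) by omega]
        exact hg3 (2*n₁+2+i) (by omega)
      · rintro ⟨j, hj1, hj2, hj3⟩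
        rw [hI2len] at hj2
        rw [gI2 j hj2, gI2 i hi] at hj3
        exact ⟨2*n₁+2+j, by omega, by omega, hj3⟩
    · constructor
      · intro h'
        rw [List.getD_eq_default _ _ (by omega)] at h'
        exact absurd h' (by simp)
      · rintro ⟨j, hj1, hj2, hj3⟩
        rw [hI2len] at hj2
        omega
  refine ⟨⟨by rw [hI1len, hw₁len], by rw [hI1len], hcntI1, NCl_seg hl.2.2.2.1 1 (2*n₁),
    A122l_seg hl.2.2.2.2.1 1 (2*n₁), hwcI1⟩,
    ⟨by rw [hI2len, hw₂len], by rw [hI2len], hcntI2, NCl_seg hl.2.2.2.1 (2*n₁+2) (2*n₂),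
    A122l_seg hl.2.2.2.2.1 (2*n₁+2) (2*n₂), hwcI2⟩, hre⟩

theorem core (n : ℕ) : ∀ (p : DyckWord), p.semilength = n → ∀ c, ∃! l, Pl p.toList n c l := by
  induction n using Nat.strong_induction_on with
  | _ n IH =>
  intro p hp c
  by_cases h0 : p = 0
  · subst h0
    have hn0 : n = 0 := by rw [← hp]; rfl
    subst hn0
    refine ⟨[], ⟨rfl, rfl, ?_, ?_, ?_, ?_⟩, ?_⟩
    · intro k
      rw [if_neg (by omega)]
      rfl
    · intro i j k m _ _ _ hm
      simp at hm
    · intro i j k _ _ hk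
      simp at hk
    · intro i
      constructor
      · intro h
        have h' : ([] : List DyckStep).getD i D = U := h
        rw [List.getD_nil] at h'
        exact absurd h' (by simp)
      · rintro ⟨j, _, hj, _⟩
        simp at hj
    · intro l' hl'
      have : l'.length = 0 := hl'.2.1
      exact List.length_eq_zero_iff.mp this
  · -- decomposition
    have hdecomp : p.toList = U :: (p.insidePart.toList ++ D :: p.outsidePart.toList) := by
      conv_lhs => rw [← DyckWord.nest_insidePart_add_outsidePart h0]
      show ([U] ++ p.insidePart.toList ++ [D]) ++ p.outsidePart.toList = _
      simp
    set n₁ := p.insidePart.semilength with hn₁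
    set n₂ := p.outsidePart.semilength with hn₂
    have hsum : n₁ + n₂ + 1 = n := by
      rw [← hp]
      exact DyckWord.semilength_insidePart_add_semilength_outsidePart_add_one h0
    have hlt₁ : n₁ < n := by omega
    have hlt₂ : n₂ < n := by omega
    obtain ⟨l₁, hl₁, hu₁⟩ := IH n₁ hlt₁ p.insidePart rfl (c + n₂)
    obtain ⟨l₂, hl₂, hu₂⟩ := IH n₂ hlt₂ p.outsidePart rfl c
    refine ⟨(c + n₁ + n₂) :: (l₁ ++ (c + n₁ + n₂) :: l₂), ?_, ?_⟩
    · rw [hdecomp, ← hsum]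
      exact assemble hl₁ hl₂
    · intro l' hl'
      rw [hdecomp, ← hsum] at hl'
      obtain ⟨hA, hB, hre⟩ := split p.insidePart.count_U_eq_count_D
        p.insidePart.count_D_le_count_U
        (by rw [← DyckWord.two_mul_semilength_eq_length])
        (by rw [← DyckWord.two_mul_semilength_eq_length]) hl'
      rw [hre, hu₁ _ hA, hu₂ _ hB]

lemma step_eq {s t : DyckStep} (h : s = U ↔ t = U) : s = t := by
  cases s <;> cases t <;> simp_all <;> exact (h.mp rfl).elim

lemma card_range_filter {m : ℕ} (P : ℕ → Prop) [DecidablePred P] :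
    ((Finset.range m).filter P).card = (Finset.univ.filter (fun i : Fin m => P i.val)).card := by
  rw [← Finset.card_image_of_injective
    (Finset.univ.filter (fun i : Fin m => P i.val)) Fin.val_injective]
  congr 1
  ext a
  simp only [Finset.mem_image, Finset.mem_filter, Finset.mem_range, Finset.mem_univ, true_and]
  constructor
  · rintro ⟨ha, hP⟩
    exact ⟨⟨a, ha⟩, hP, rfl⟩
  · rintro ⟨i, hP, rfl⟩
    exact ⟨i.2, hP⟩

variable {n : ℕ}

def lof (π : Fin (2*n) → Fin n) : List ℕ := List.ofFn (fun i => (π i : ℕ))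

def wof (π : Fin (2*n) → Fin n) : List DyckStep :=
  List.ofFn (fun i : Fin (2*n) => if ∃ j : Fin (2*n), i < j ∧ π j = π i then U else D)

lemma lof_len (π : Fin (2*n) → Fin n) : (lof π).length = 2*n := by simp [lof]
lemma wof_len (π : Fin (2*n) → Fin n) : (wof π).length = 2*n := by simp [wof]

lemma lof_getD (π : Fin (2*n) → Fin n) (i : ℕ) (h : i < 2*n) :
    (lof π).getD i 0 = (π ⟨i, h⟩ : ℕ) := by
  rw [List.getD_eq_getElem _ _ (by rw [lof_len]; exact h)]
  simp [lof]

lemma wof_getD (π : Fin (2*n) → Fin n) (i : ℕ) (h : i < 2*n) :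
    (wof π).getD i D = if ∃ j : Fin (2*n), ⟨i, h⟩ < j ∧ π j = π ⟨i, h⟩ then U else D := by
  rw [List.getD_eq_getElem _ _ (by rw [wof_len]; exact h)]
  simp [wof]

lemma toPl {π : Fin (2*n) → Fin n} (h1 : IsMultisetPerm π) (h2 : NonCrossing π)
    (h3 : Avoids122 π) : Pl (wof π) n 0 (lof π) := by
  classical
  refine ⟨by rw [lof_len, wof_len], lof_len π, ?_, ?_, ?_, ?_⟩
  · intro k
    by_cases hk : k < n
    · rw [if_pos (by omega)]
      rw [count_eq_card_filter (lof π) 0 k, lof_len,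
        card_range_filter (fun i => (lof π).getD i 0 = k)]
      have hsets : (Finset.univ.filter (fun i : Fin (2*n) => (lof π).getD i.val 0 = k)) =
          (Finset.univ.filter fun i => π i = ⟨k, hk⟩) := by
        apply Finset.filter_congr
        intro i _
        rw [lof_getD π i.val i.2]
        rw [show (⟨i.val, i.2⟩ : Fin (2*n)) = i from rfl]
        constructor
        · intro h'
          exact Fin.ext (by simpa using h')
        · intro h'
          rw [h']
      rw [hsets, h1 ⟨k, hk⟩]
    · rw [if_neg (by omega), List.count_eq_zero]
      intro hmem
      simp only [lof, List.mem_ofFn] at hmem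
      obtain ⟨i, hi⟩ := hmem
      exact hk (hi ▸ (π i).2)
  · -- NCl
    intro i j k m hij hjk hkm hm hik hjm
    rw [lof_len] at hm
    by_contra hne
    apply h2
    refine ⟨⟨i, by omega⟩, ⟨j, by omega⟩, ⟨k, by omega⟩, ⟨m, by omega⟩, hij, hjk, hkm, ?_, ?_, ?_⟩
    · apply Fin.ext
      rw [← lof_getD π i (by omega), ← lof_getD π k (by omega)]
      exact hik
    · apply Fin.ext
      rw [← lof_getD π j (by omega), ← lof_getD π m (by omega)]
      exact hjm
    · intro he
      apply hne
      rw [lof_getD π i (by omega), lof_getD π j (by omega), he]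
  · -- A122
    intro i j k hij hjk hk hjkv
    rw [lof_len] at hk
    by_contra hle
    push_neg at hle
    apply h3
    refine ⟨⟨i, by omega⟩, ⟨j, by omega⟩, ⟨k, by omega⟩, hij, hjk, ?_, ?_⟩
    · rw [← Fin.val_fin_lt]
      rw [← lof_getD π i (by omega), ← lof_getD π j (by omega)]
      exact hle
    · apply Fin.ext
      rw [← lof_getD π j (by omega), ← lof_getD π k (by omega)]
      exact hjkv
  · -- word clause
    intro i
    rcases lt_or_ge i (2*n) with hi | hi
    · rw [wof_getD π i hi]
      constructor
      · intro h'
        by_cases hex : ∃ j : Fin (2*n), ⟨i, hi⟩ < j ∧ π j = π ⟨i, hi⟩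
        · obtain ⟨j, hj1, hj2⟩ := hex
          refine ⟨j.val, hj1, by rw [lof_len]; exact j.2, ?_⟩
          rw [lof_getD π j.val j.2, lof_getD π i hi]
          rw [show (⟨j.val, j.2⟩ : Fin (2*n)) = j from rfl, hj2]
        · rw [if_neg hex] at h'
          exact absurd h' (by simp)
      · rintro ⟨j, hj1, hj2, hj3⟩
        rw [lof_len] at hj2
        rw [if_pos ⟨⟨j, hj2⟩, hj1, Fin.ext (by
          rw [← lof_getD π j hj2, ← lof_getD π i hi]; exact hj3)⟩]
    · constructor
      · intro h'
        rw [List.getD_eq_default _ _ (by rw [wof_len]; omega)] at h'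
        exact absurd h' (by simp)
      · rintro ⟨j, hj1, hj2, _⟩
        rw [lof_len] at hj2
        omega

/-- the Dyck word of a valid permutation -/
def dwof {π : Fin (2*n) → Fin n} (h1 : IsMultisetPerm π) (h2 : NonCrossing π)
    (h3 : Avoids122 π) : DyckWord where
  toList := wof π
  count_U_eq_count_D := by
    have hU := (toPl h1 h2 h3).countU
    have := countU_add_countD (wof π)
    have := wof_len π
    omega
  count_D_le_count_U i := (toPl h1 h2 h3).prefixLe i

theorem main (n : ℕ) :
    Nat.card {π : Fin (2*n) → Fin n //
      IsMultisetPerm π ∧ NonCrossing π ∧ Avoids122 π} =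
      Nat.choose (2*n) n / (n+1) := by
  classical
  have hbij : ∃ F : {π : Fin (2*n) → Fin n //
      IsMultisetPerm π ∧ NonCrossing π ∧ Avoids122 π} →
      {p : DyckWord // p.semilength = n}, Function.Bijective F := by
    refine ⟨fun x => ⟨dwof x.2.1 x.2.2.1 x.2.2.2, ?_⟩, ?_, ?_⟩
    · have := (toPl x.2.1 x.2.2.1 x.2.2.2).countU
      exact this
    · -- injective
      rintro ⟨π, hπ⟩ ⟨π', hπ'⟩ he
      have hw : wof π = wof π' := congrArg (fun y => y.val.toList) he
      have hP1 := toPl hπ.1 hπ.2.1 hπ.2.2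
      have hP2 := toPl hπ'.1 hπ'.2.1 hπ'.2.2
      rw [← hw] at hP2
      obtain ⟨l₀, _, hu⟩ := core n (dwof hπ.1 hπ.2.1 hπ.2.2)
        ((toPl hπ.1 hπ.2.1 hπ.2.2).countU) 0
      have e1 : lof π = l₀ := hu _ hP1
      have e2 : lof π' = l₀ := hu _ hP2
      have : lof π = lof π' := by rw [e1, e2]
      apply Subtype.ext
      funext i
      apply Fin.ext
      rw [← lof_getD π i.val i.2, ← lof_getD π' i.val i.2, this]
    · -- surjective
      rintro ⟨p, hp⟩
      obtain ⟨l, hPl, -⟩ := core n p hp 0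
      have hllen : l.length = 2*n := hPl.2.1
      have hbnd : ∀ i : Fin (2*n), l.getD i.val 0 < n := by
        intro i
        have := hPl.bound (i := i.val) (by omega)
        omega
      set π : Fin (2*n) → Fin n := fun i => ⟨l.getD i.val 0, hbnd i⟩ with hπdef
      have hlofl : lof π = l := by
        apply List.ext_getElem
        · rw [lof_len, hllen]
        · intro i hi1 hi2
          rw [← List.getD_eq_getElem _ 0 hi1, ← List.getD_eq_getElem _ 0 hi2,
            lof_getD π i (by rw [lof_len] at hi1; exact hi1)]
      -- the word of π equals p
      have hword : ∀ i, (wof π).getD i D = p.toList.getD i D := by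
        intro i
        rcases lt_or_ge i (2*n) with hi | hi
        · apply step_eq
          rw [wof_getD π i hi]
          have hiff := hPl.2.2.2.2.2 i
          rw [hiff]
          constructor
          · intro h'
            by_cases hex : ∃ j : Fin (2*n), ⟨i, hi⟩ < j ∧ π j = π ⟨i, hi⟩
            · obtain ⟨j, hj1, hj2⟩ := hex
              refine ⟨j.val, hj1, by omega, ?_⟩
              have hv : (π j : ℕ) = (π ⟨i, hi⟩ : ℕ) := congrArg Fin.val hj2
              simpa [hπdef] using hv
            · rw [if_neg hex] at h'
              exact absurd h' (by simp)
          · rintro ⟨j, hj1, hj2, hj3⟩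
            rw [hllen] at hj2
            rw [if_pos ⟨⟨j, hj2⟩, hj1, Fin.ext (by simpa [hπdef] using hj3)⟩]
        · rw [List.getD_eq_default _ _ (by rw [wof_len]; omega),
            List.getD_eq_default _ _ (by
              have : p.toList.length = 2*n := by rw [← hPl.1, hllen]
              omega)]
      have hmp : IsMultisetPerm π := by
        intro v
        have hcnt := hPl.2.2.1 v.val
        rw [if_pos (by omega)] at hcnt
        have hsets : (Finset.univ.filter (fun i : Fin (2*n) => π i = v)) =
            (Finset.univ.filter (fun i : Fin (2*n) => l.getD i.val 0 = v.val)) := by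
          apply Finset.filter_congr
          intro i _
          simp only [hπdef]
          constructor
          · intro h'
            exact congrArg Fin.val h'
          · intro h'
            exact Fin.ext h'
        rw [count_eq_card_filter l 0 v.val, hllen,
          card_range_filter (fun i => l.getD i 0 = v.val)] at hcnt
        rw [hsets]
        exact hcnt
      have hnc : NonCrossing π := by
        rintro ⟨i, j, k, m, hij, hjk, hkm, hik, hjm, hne⟩
        apply hne
        apply Fin.ext
        have := hPl.2.2.2.1 i.val j.val k.val m.val hij hjk hkm (by omega)
          (congrArg Fin.val hik) (congrArg Fin.val hjm)
        exact this
      have ha : Avoids122 π := by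
        rintro ⟨i, j, k, hij, hjk, hlt, heq⟩
        have := hPl.2.2.2.2.1 i.val j.val k.val hij hjk (by omega)
          (congrArg Fin.val heq)
        have hlt' : (π i : ℕ) < (π j : ℕ) := hlt
        simp only [hπdef] at hlt' this
        omega
      refine ⟨⟨π, hmp, hnc, ha⟩, ?_⟩
      apply Subtype.ext
      apply DyckWord.ext
      show wof π = p.toList
      apply List.ext_getElem
      · rw [wof_len, ← hPl.1, hllen]
      · intro i hi1 hi2
        rw [← List.getD_eq_getElem _ D hi1, ← List.getD_eq_getElem _ D hi2]
        exact hword i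
  obtain ⟨F, hF⟩ := hbij
  rw [Nat.card_eq_of_bijective F hF, Nat.card_eq_fintype_card,
    DyckWord.card_dyckWord_semilength_eq_catalan, catalan_eq_centralBinom_div,
    Nat.centralBinom]

end NCP

theorem stmt12 (n : ℕ) (hn : 1 ≤ n) :
    Nat.card {π : Fin (2*n) → Fin n //
      IsMultisetPerm π ∧ NonCrossing π ∧ Avoids122 π} =
      Nat.choose (2*n) n / (n+1) := by
  exact NCP.main n
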